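/- Let m: Λ¹ ⊗ Λ¹ → Λ² be the multiplication map of the quantum exterior algebra Λ, where Λ¹ is the 6-dimensional span of the generators and Λ² the degree-2 component. Then dim ker(m) = 21, and for each root α ∈ Δ = {±α₁, ±α₂, ±(α₁+α₂)}, the Q-weight-α homogeneous component of ker(m) is one-dimensional. (This yields that the affine space of covariant torsion-free connections for Ω¹_q(F₃) has dimension 6.) -/

import Mathlib

noncomputable section

namespace QFlagExt

/-- The positive roots of `sl₃`: `a1 = α₁`, `a2 = α₂`, `a12 = α₁+α₂`. -/
inductive PosRoot : Type
  | a1 | a2 | a12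
deriving DecidableEq

instance : Fintype PosRoot :=
  ⟨{PosRoot.a1, PosRoot.a2, PosRoot.a12}, fun x => by cases x <;> simp⟩

open PosRoot

/-- Position in the convex order `α₂ < α₁+α₂ < α₁`. -/
def pos : PosRoot → ℕ
  | a2 => 0
  | a12 => 1
  | a1 => 2

/-- The symmetric bilinear form `(·,·)` on the roots of `sl₃`. -/
def ip : PosRoot → PosRoot → ℤ
  | a1, a1 => 2
  | a2, a2 => 2
  | a12, a12 => 2
  | a1, a2 => -1
  | a2, a1 => -1
  | a1, a12 => 1
  | a12, a1 => 1
  | a2, a12 => 1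
  | a12, a2 => 1

/-- Generators of the quantum exterior algebra: `e γ` and `f γ` for `γ ∈ Δ⁺`. -/
inductive LGen : Type
  | e : PosRoot → LGen
  | f : PosRoot → LGen
deriving DecidableEq, Fintype

open LGen

/-- The generators viewed inside the free algebra. -/
def ce (x : LGen) : FreeAlgebra ℂ LGen := FreeAlgebra.ι ℂ x

/-- The defining relations of the quantum exterior algebra `Λ` of the full quantum
flag manifold of `O_q(SU₃)`. -/
inductive lrel (q : ℝ) : FreeAlgebra ℂ LGen → FreeAlgebra ℂ LGen → Prop
  | ee (β γ : PosRoot) (h : pos β ≤ pos γ) :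
      lrel q (ce (e γ) * ce (e β)) ((-((q : ℂ) ^ ip β γ)) • (ce (e β) * ce (e γ)))
  | ff (β γ : PosRoot) (h : pos β ≤ pos γ) :
      lrel q (ce (f γ) * ce (f β)) ((-((q : ℂ) ^ (-ip β γ))) • (ce (f β) * ce (f γ)))
  | ef (β γ : PosRoot) (h : β ≠ γ ∨ (β = a12 ∧ γ = a12)) :
      lrel q (ce (e γ) * ce (f β)) ((-((q : ℂ) ^ ip β γ)) • (ce (f β) * ce (e γ)))
  | ef1 :
      lrel q (ce (e a1) * ce (f a1))
        ((-((q : ℂ) ^ (2 : ℤ))) • (ce (f a1) * ce (e a1))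
          - ((q : ℂ) - (q : ℂ)⁻¹) • (ce (f a12) * ce (e a12)))
  | ef2 :
      lrel q (ce (e a2) * ce (f a2))
        ((-((q : ℂ) ^ (2 : ℤ))) • (ce (f a2) * ce (e a2))
          + ((q : ℂ) - (q : ℂ)⁻¹) • (ce (f a12) * ce (e a12)))

/-- The quantum exterior algebra `Λ`. -/
abbrev Lam (q : ℝ) := RingQuot (lrel q)

/-- The generators of `Λ`. -/
def gen (q : ℝ) (x : LGen) : Lam q := RingQuot.mkAlgHom ℂ (lrel q) (ce x)

/-- The positive roots listed in the convex order. -/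
def rootList : List PosRoot := [a2, a12, a1]

/-- The ordered monomial `e_{γ₁}⋯e_{γ_a}` over the roots in `s`, in increasing convex order. -/
def emon (q : ℝ) (s : Finset PosRoot) : Lam q :=
  ((rootList.filter fun γ => decide (γ ∈ s)).map fun γ => gen q (e γ)).prod

/-- The ordered monomial `f_{δ₁}⋯f_{δ_b}` over the roots in `s`, in increasing convex order. -/
def fmon (q : ℝ) (s : Finset PosRoot) : Lam q :=
  ((rootList.filter fun γ => decide (γ ∈ s)).map fun γ => gen q (f γ)).prod

/-- The PBW monomial `f_{δ₁}⋯f_{δ_b} e_{γ₁}⋯e_{γ_a}`. -/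
def mon (q : ℝ) (p : Finset PosRoot × Finset PosRoot) : Lam q :=
  fmon q p.1 * emon q p.2

end QFlagExt

namespace QFlagExt

open PosRoot LGen

open scoped TensorProduct

/-- Coordinates of a positive root in the root lattice `Q = ℤα₁ ⊕ ℤα₂ ≅ ℤ × ℤ`. -/
def coords : PosRoot → ℤ × ℤ
  | a1 => (1, 0)
  | a2 => (0, 1)
  | a12 => (1, 1)

/-- The `Q`-weight of a generator: `e γ` has weight `γ` and `f γ` has weight `−γ`. -/
def wt : LGen → ℤ × ℤ
  | e γ => coords γ
  | f γ => -coords γ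

/-- The span `Λ¹` of the generators of `Λ`. -/
def V1 (q : ℝ) : Submodule ℂ (Lam q) := Submodule.span ℂ (Set.range (gen q))

/-- The generators as elements of `Λ¹`. -/
def genV (q : ℝ) (x : LGen) : V1 q :=
  ⟨gen q x, Submodule.subset_span (Set.mem_range_self x)⟩

/-- The multiplication map `m : Λ¹ ⊗ Λ¹ → Λ`. -/
def mulMap (q : ℝ) : (V1 q) ⊗[ℂ] (V1 q) →ₗ[ℂ] Lam q :=
  TensorProduct.lift
    (((LinearMap.mul ℂ (Lam q)).comp (V1 q).subtype).compl₂ (V1 q).subtype)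

/-- The `Q`-weight-`w` homogeneous component of `Λ¹ ⊗ Λ¹`. -/
def wtComp (q : ℝ) (w : ℤ × ℤ) : Submodule ℂ ((V1 q) ⊗[ℂ] (V1 q)) :=
  Submodule.span ℂ
    {t | ∃ g h : LGen, wt g + wt h = w ∧ t = genV q g ⊗ₜ[ℂ] genV q h}

/-- The set of `Q`-weights of the six roots of `sl₃`. -/
def rootWts : Set (ℤ × ℤ) := {(1, 0), (0, 1), (1, 1), (-1, 0), (0, -1), (-1, -1)}


section Aux

abbrev VV : Type := LGen → ℂ
abbrev WW : Type := LGen × LGen → ℂ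
abbrev MM : Type := ℂ × VV × WW

/-- basis vector of `VV`. -/
def dg (x : LGen) : VV := Pi.single x 1

/-- basis vector of `WW`. -/
def dw (p : LGen × LGen) : WW := Pi.single p 1

/-- Straightening of a product of two generators into normal form. -/
def red (q : ℝ) : LGen → LGen → WW
  | .e .a2, .e .a12 => dw (e a2, e a12)
  | .e .a2, .e .a1 => dw (e a2, e a1)
  | .e .a12, .e .a1 => dw (e a12, e a1)
  | .e .a2, .e .a2 => 0
  | .e .a12, .e .a12 => 0
  | .e .a1, .e .a1 => 0
  | .e .a12, .e .a2 => (-((q : ℂ) ^ (1 : ℤ))) • dw (e a2, e a12)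
  | .e .a1, .e .a2 => (-((q : ℂ) ^ (-1 : ℤ))) • dw (e a2, e a1)
  | .e .a1, .e .a12 => (-((q : ℂ) ^ (1 : ℤ))) • dw (e a12, e a1)
  | .f .a2, .f .a12 => dw (f a2, f a12)
  | .f .a2, .f .a1 => dw (f a2, f a1)
  | .f .a12, .f .a1 => dw (f a12, f a1)
  | .f .a2, .f .a2 => 0
  | .f .a12, .f .a12 => 0
  | .f .a1, .f .a1 => 0
  | .f .a12, .f .a2 => (-((q : ℂ) ^ (-1 : ℤ))) • dw (f a2, f a12)
  | .f .a1, .f .a2 => (-((q : ℂ) ^ (1 : ℤ))) • dw (f a2, f a1)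
  | .f .a1, .f .a12 => (-((q : ℂ) ^ (-1 : ℤ))) • dw (f a12, f a1)
  | .f b, .e g => dw (f b, e g)
  | .e .a1, .f .a2 => (-((q : ℂ) ^ (-1 : ℤ))) • dw (f a2, e a1)
  | .e .a1, .f .a12 => (-((q : ℂ) ^ (1 : ℤ))) • dw (f a12, e a1)
  | .e .a2, .f .a1 => (-((q : ℂ) ^ (-1 : ℤ))) • dw (f a1, e a2)
  | .e .a2, .f .a12 => (-((q : ℂ) ^ (1 : ℤ))) • dw (f a12, e a2)
  | .e .a12, .f .a1 => (-((q : ℂ) ^ (1 : ℤ))) • dw (f a1, e a12)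
  | .e .a12, .f .a2 => (-((q : ℂ) ^ (1 : ℤ))) • dw (f a2, e a12)
  | .e .a12, .f .a12 => (-((q : ℂ) ^ (2 : ℤ))) • dw (f a12, e a12)
  | .e .a1, .f .a1 =>
      (-((q : ℂ) ^ (2 : ℤ))) • dw (f a1, e a1) - ((q : ℂ) - (q : ℂ)⁻¹) • dw (f a12, e a12)
  | .e .a2, .f .a2 =>
      (-((q : ℂ) ^ (2 : ℤ))) • dw (f a2, e a2) + ((q : ℂ) - (q : ℂ)⁻¹) • dw (f a12, e a12)

/-- Bilinear straightened multiplication `VV × VV → WW`. -/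
def mu (q : ℝ) (v w : VV) : WW := ∑ x : LGen, ∑ y : LGen, (v x * w y) • red q x y

lemma mu_add (q : ℝ) (v w w' : VV) : mu q v (w + w') = mu q v w + mu q v w' := by
  simp [mu, mul_add, add_smul, Finset.sum_add_distrib]

lemma mu_smul (q : ℝ) (v : VV) (c : ℂ) (w : VV) : mu q v (c • w) = c • mu q v w := by
  simp only [mu, Pi.smul_apply, smul_eq_mul, Finset.smul_sum, smul_smul, mul_left_comm]

lemma mu_zero (q : ℝ) (v : VV) : mu q v 0 = 0 := by
  simp [mu]

lemma mu_dg (q : ℝ) (x y : LGen) : mu q (dg x) (dg y) = red q x y := by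
  simp [mu, dg, Pi.single_apply]

/-- Left multiplication operator by a generator on the truncated module `MM`. -/
def Lg (q : ℝ) (g : LGen) : MM →ₗ[ℂ] MM where
  toFun m := (0, m.1 • dg g, mu q (dg g) m.2.1)
  map_add' m m' := by
    simp [mu_add, add_smul, Prod.ext_iff]
  map_smul' c m := by
    simp [mu_smul, smul_smul, Prod.ext_iff, Prod.smul_def]

def phi (q : ℝ) : FreeAlgebra ℂ LGen →ₐ[ℂ] Module.End ℂ MM := FreeAlgebra.lift ℂ (Lg q)


lemma phi_ce (q : ℝ) (x : LGen) : phi q (ce x) = Lg q x :=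
  FreeAlgebra.lift_ι_apply _ _

lemma Lg_Lg_apply (q : ℝ) (g h : LGen) (m : MM) :
    Lg q g (Lg q h m) = (0, 0, m.1 • red q g h) := by
  simp [Lg, mu_smul, mu_dg, mu_zero]

lemma real_smul_ww (c : ℝ) (x : WW) : c • x = ((c : ℂ)) • x := by
  rw [← algebraMap_smul ℂ c x, Complex.coe_algebraMap]

set_option maxHeartbeats 2000000 in
lemma phi_rel (q : ℝ) : ∀ ⦃a b : FreeAlgebra ℂ LGen⦄, lrel q a b → phi q a = phi q b := by
  intro a b h
  induction h with
  | ee β γ h =>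
      rcases β <;> rcases γ <;>
        first
          | exact absurd h (by decide)
          | (simp only [map_mul, map_smul, phi_ce]
             refine LinearMap.ext fun m => ?_
             simp [Module.End.mul_apply, LinearMap.smul_apply, Lg_Lg_apply, red, ip,
               Prod.ext_iff, Prod.smul_def, smul_smul, Complex.real_smul, mul_comm]
             try (simp only [real_smul_ww, smul_smul, mul_comm]))
  | ff β γ h =>
      rcases β <;> rcases γ <;>
        first
          | exact absurd h (by decide)
          | (simp only [map_mul, map_smul, phi_ce]
             refine LinearMap.ext fun m => ?_
             simp [Module.End.mul_apply, LinearMap.smul_apply, Lg_Lg_apply, red, ip,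
               Prod.ext_iff, Prod.smul_def, smul_smul, Complex.real_smul, mul_comm]
             try (simp only [real_smul_ww, smul_smul, mul_comm]))
  | ef β γ h =>
      rcases β <;> rcases γ <;>
        first
          | exact absurd h (by decide)
          | (simp only [map_mul, map_smul, phi_ce]
             refine LinearMap.ext fun m => ?_
             simp [Module.End.mul_apply, LinearMap.smul_apply, Lg_Lg_apply, red, ip,
               Prod.ext_iff, Prod.smul_def, smul_smul, Complex.real_smul, mul_comm]
             try (simp only [real_smul_ww, smul_smul, mul_comm]))
  | ef1 =>
      simp only [map_mul, map_smul, map_sub, phi_ce]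
      refine LinearMap.ext fun m => ?_
      simp [Module.End.mul_apply, LinearMap.smul_apply, LinearMap.sub_apply, Lg_Lg_apply, red,
        Prod.ext_iff, Prod.smul_def, smul_smul, smul_sub, sub_smul, Complex.real_smul, mul_comm]
      try (simp only [real_smul_ww, smul_smul, mul_comm])
      try ring
  | ef2 =>
      simp only [map_mul, map_smul, map_add, phi_ce]
      refine LinearMap.ext fun m => ?_
      simp [Module.End.mul_apply, LinearMap.smul_apply, LinearMap.add_apply, Lg_Lg_apply, red,
        Prod.ext_iff, Prod.smul_def, smul_smul, smul_add, add_smul, Complex.real_smul, mul_comm]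
      try (simp only [real_smul_ww, smul_smul, mul_comm])
      try ring


def psi (q : ℝ) : Lam q →ₐ[ℂ] Module.End ℂ MM :=
  RingQuot.liftAlgHom ℂ ⟨phi q, phi_rel q⟩

lemma psi_gen (q : ℝ) (x : LGen) : psi q (gen q x) = Lg q x := by
  rw [gen, psi, RingQuot.liftAlgHom_mkAlgHom_apply]
  exact phi_ce q x

def Phi (q : ℝ) : Lam q →ₗ[ℂ] MM :=
  (LinearMap.applyₗ ((1 : ℂ), (0 : VV), (0 : WW))).comp (psi q).toLinearMap

lemma Phi_gen (q : ℝ) (x : LGen) : Phi q (gen q x) = (0, dg x, 0) := by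
  simp [Phi, psi_gen, Lg, mu_zero]

lemma Phi_genmul (q : ℝ) (g h : LGen) : Phi q (gen q g * gen q h) = (0, 0, red q g h) := by
  simp [Phi, map_mul, psi_gen, Module.End.mul_apply, Lg_Lg_apply]

lemma dg_li : LinearIndependent ℂ dg := by
  have h := (Pi.basisFun ℂ LGen).linearIndependent
  convert h using 1
  funext x
  simp [dg, Pi.basisFun_apply]

lemma gen_li (q : ℝ) : LinearIndependent ℂ (gen q) := by
  apply LinearIndependent.of_comp
    (((LinearMap.fst ℂ VV WW).comp (LinearMap.snd ℂ ℂ (VV × WW))).comp (Phi q))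
  have : (fun x => (((LinearMap.fst ℂ VV WW).comp (LinearMap.snd ℂ ℂ (VV × WW))).comp (Phi q))
      (gen q x)) = dg := by
    funext x; simp [Phi_gen]
  rw [Function.comp_def]
  rw [this]
  exact dg_li

def B1 (q : ℝ) : Module.Basis LGen ℂ (V1 q) := Module.Basis.span (gen_li q)

lemma B1_apply (q : ℝ) (x : LGen) : B1 q x = genV q x := by
  apply Subtype.ext
  exact congrArg Subtype.val (Module.Basis.span_apply (gen_li q) x)

def BB (q : ℝ) : Module.Basis (LGen × LGen) ℂ ((V1 q) ⊗[ℂ] (V1 q)) :=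
  (B1 q).tensorProduct (B1 q)

lemma BB_apply (q : ℝ) (p : LGen × LGen) : BB q p = genV q p.1 ⊗ₜ[ℂ] genV q p.2 := by
  obtain ⟨g, h⟩ := p
  rw [BB, Module.Basis.tensorProduct_apply', B1_apply, B1_apply]

lemma BB_apply' (q : ℝ) (g h : LGen) : BB q (g, h) = genV q g ⊗ₜ[ℂ] genV q h :=
  BB_apply q (g, h)

lemma mulMap_tmul (q : ℝ) (x y : V1 q) : mulMap q (x ⊗ₜ[ℂ] y) = (x : Lam q) * (y : Lam q) := by
  simp [mulMap]

lemma mulMap_BB (q : ℝ) (p : LGen × LGen) : mulMap q (BB q p) = gen q p.1 * gen q p.2 := by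
  rw [BB_apply, mulMap_tmul]; rfl

def P3 : MM →ₗ[ℂ] WW := (LinearMap.snd ℂ VV WW).comp (LinearMap.snd ℂ ℂ (VV × WW))

def Theta (q : ℝ) : ((V1 q) ⊗[ℂ] (V1 q)) →ₗ[ℂ] WW := P3 ∘ₗ (Phi q) ∘ₗ (mulMap q)

lemma Theta_BB (q : ℝ) (p : LGen × LGen) : Theta q (BB q p) = red q p.1 p.2 := by
  simp [Theta, P3, mulMap_BB, Phi_genmul]


lemma gen_ee (q : ℝ) (β γ : PosRoot) (h : pos β ≤ pos γ) :
    gen q (e γ) * gen q (e β) = (-((q : ℂ) ^ ip β γ)) • (gen q (e β) * gen q (e γ)) := by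
  have := RingQuot.mkAlgHom_rel ℂ (lrel.ee (q := q) β γ h)
  simp only [map_mul, map_smul] at this
  exact this

lemma gen_ff (q : ℝ) (β γ : PosRoot) (h : pos β ≤ pos γ) :
    gen q (f γ) * gen q (f β) = (-((q : ℂ) ^ (-ip β γ))) • (gen q (f β) * gen q (f γ)) := by
  have := RingQuot.mkAlgHom_rel ℂ (lrel.ff (q := q) β γ h)
  simp only [map_mul, map_smul] at this
  exact this

lemma gen_ef (q : ℝ) (β γ : PosRoot) (h : β ≠ γ ∨ (β = a12 ∧ γ = a12)) :
    gen q (e γ) * gen q (f β) = (-((q : ℂ) ^ ip β γ)) • (gen q (f β) * gen q (e γ)) := by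
  have := RingQuot.mkAlgHom_rel ℂ (lrel.ef (q := q) β γ h)
  simp only [map_mul, map_smul] at this
  exact this

lemma gen_ef1 (q : ℝ) :
    gen q (e a1) * gen q (f a1)
      = (-((q : ℂ) ^ (2 : ℤ))) • (gen q (f a1) * gen q (e a1))
        - ((q : ℂ) - (q : ℂ)⁻¹) • (gen q (f a12) * gen q (e a12)) := by
  have := RingQuot.mkAlgHom_rel ℂ (lrel.ef1 (q := q))
  simp only [map_mul, map_smul, map_sub] at this
  exact this

lemma gen_ef2 (q : ℝ) :
    gen q (e a2) * gen q (f a2)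
      = (-((q : ℂ) ^ (2 : ℤ))) • (gen q (f a2) * gen q (e a2))
        + ((q : ℂ) - (q : ℂ)⁻¹) • (gen q (f a12) * gen q (e a12)) := by
  have := RingQuot.mkAlgHom_rel ℂ (lrel.ef2 (q := q))
  simp only [map_mul, map_smul, map_add] at this
  exact this

lemma one_add_zpow_ne (q : ℝ) (hq : 0 < q) (n : ℤ) : (1 : ℂ) + (q : ℂ) ^ n ≠ 0 := by
  have h1 : ((q : ℂ)) ^ n = (((q ^ n : ℝ)) : ℂ) := by
    push_cast
    ring
  rw [h1]
  have h2 : ((1 : ℂ) + ((q ^ n : ℝ) : ℂ)) = (((1 + q ^ n : ℝ)) : ℂ) := by push_cast; ring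
  rw [h2, Complex.ofReal_ne_zero]
  have : (0 : ℝ) < q ^ n := zpow_pos hq n
  linarith

lemma smul_cancel {q : ℝ} (hq : 0 < q) (n : ℤ) {x : Lam q}
    (h : x = (-((q : ℂ) ^ n)) • x) : x = 0 := by
  have h2 : ((1 : ℂ) + (q : ℂ) ^ n) • x = 0 := by
    rw [add_smul, one_smul]
    nth_rewrite 1 [h]
    rw [← add_smul, neg_add_cancel, zero_smul]
  rcases smul_eq_zero.1 h2 with h3 | h3
  · exact absurd h3 (one_add_zpow_ne q hq n)
  · exact h3

lemma gen_e_sq (q : ℝ) (hq : 0 < q) (γ : PosRoot) : gen q (e γ) * gen q (e γ) = 0 := by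
  have hip : ip γ γ = 2 := by cases γ <;> rfl
  exact smul_cancel hq 2 (by rw [← hip]; exact gen_ee q γ γ le_rfl)

lemma gen_f_sq (q : ℝ) (hq : 0 < q) (γ : PosRoot) : gen q (f γ) * gen q (f γ) = 0 := by
  have hip : -ip γ γ = -2 := by cases γ <;> rfl
  exact smul_cancel hq (-2) (by rw [← hip]; exact gen_ff q γ γ le_rfl)

def lam2 (q : ℝ) : WW →ₗ[ℂ] Lam q where
  toFun w := ∑ p : LGen × LGen, w p • (gen q p.1 * gen q p.2)
  map_add' w w' := by simp [add_smul, Finset.sum_add_distrib]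
  map_smul' c w := by simp [Finset.smul_sum, smul_smul]

lemma lam2_dw (q : ℝ) (p : LGen × LGen) : lam2 q (dw p) = gen q p.1 * gen q p.2 := by
  simp [lam2, dw, Pi.single_apply]

lemma straighten (q : ℝ) (hq : 0 < q) (g h : LGen) :
    gen q g * gen q h = lam2 q (red q g h) := by
  rcases g with β | β <;> rcases h with γ | γ <;> rcases β <;> rcases γ <;>
    first
      | (rw [gen_e_sq q hq]; simp [red])
      | (rw [gen_f_sq q hq]; simp [red])
      | (simp only [red, lam2_dw]; done)
      | (simp only [red, map_smul, lam2_dw]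
         first
           | exact gen_ee q _ _ (by decide)
           | exact gen_ff q _ _ (by decide)
           | exact gen_ef q _ _ (by decide))
      | (simp only [red, map_sub, map_smul, lam2_dw]; exact gen_ef1 q)
      | (simp only [red, map_add, map_smul, lam2_dw]; exact gen_ef2 q)

lemma mulMap_eq (q : ℝ) (hq : 0 < q) : mulMap q = (lam2 q) ∘ₗ (Theta q) := by
  apply (BB q).ext
  rintro ⟨g, h⟩
  rw [LinearMap.comp_apply, Theta_BB, mulMap_BB, straighten q hq]

lemma ker_eq (q : ℝ) (hq : 0 < q) :
    LinearMap.ker (mulMap q) = LinearMap.ker (Theta q) := by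
  apply le_antisymm
  · intro x hx
    rw [LinearMap.mem_ker] at hx ⊢
    rw [Theta, LinearMap.comp_apply, LinearMap.comp_apply, hx]
    simp
  · intro x hx
    rw [LinearMap.mem_ker] at hx ⊢
    rw [mulMap_eq q hq, LinearMap.comp_apply, hx]
    simp


/-- normal-form pairs -/
def nfb : LGen × LGen → Bool
  | (f _, e _) => true
  | (e β, e γ) => decide (pos β < pos γ)
  | (f β, f γ) => decide (pos β < pos γ)
  | _ => false

abbrev NFT : Type := {p : LGen × LGen // nfb p = true}

lemma card_NFT : Fintype.card NFT = 15 := by decide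

lemma dw_li : LinearIndependent ℂ (fun p : NFT => dw p.val) := by
  have h := (Pi.basisFun ℂ (LGen × LGen)).linearIndependent
  have h2 := h.comp (fun p : NFT => p.val) Subtype.val_injective
  convert h2 using 1
  funext p
  simp [dw, Pi.basisFun_apply]

lemma red_nf (q : ℝ) (p : LGen × LGen) (h : nfb p = true) : red q p.1 p.2 = dw p := by
  obtain ⟨g, h'⟩ := p
  rcases g with β | β <;> rcases h' with γ | γ <;> rcases β <;> rcases γ <;>
    first
      | rfl
      | exact absurd h (by decide)

lemma range_Theta (q : ℝ) :
    LinearMap.range (Theta q) = Submodule.span ℂ (Set.range fun p : NFT => dw p.val) := by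
  apply le_antisymm
  · rw [LinearMap.range_eq_map, ← (BB q).span_eq, Submodule.map_span, ← Set.range_comp]
    apply Submodule.span_le.2
    rintro _ ⟨⟨g, h⟩, rfl⟩
    simp only [Function.comp_apply, Theta_BB]
    rcases g with β | β <;> rcases h with γ | γ <;> rcases β <;> rcases γ <;>
      first
        | exact zero_mem _
        | exact Submodule.subset_span ⟨⟨_, by decide⟩, rfl⟩
        | exact Submodule.smul_mem _ _ (Submodule.subset_span ⟨⟨_, by decide⟩, rfl⟩)
        | exact sub_mem (Submodule.smul_mem _ _ (Submodule.subset_span ⟨⟨_, by decide⟩, rfl⟩))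
            (Submodule.smul_mem _ _ (Submodule.subset_span ⟨⟨_, by decide⟩, rfl⟩))
        | exact add_mem (Submodule.smul_mem _ _ (Submodule.subset_span ⟨⟨_, by decide⟩, rfl⟩))
            (Submodule.smul_mem _ _ (Submodule.subset_span ⟨⟨_, by decide⟩, rfl⟩))
  · apply Submodule.span_le.2
    rintro _ ⟨p, rfl⟩
    exact ⟨BB q p.val, by rw [Theta_BB, red_nf q p.val p.2]⟩

instance lamRing (q : ℝ) : Ring (Lam q) := RingQuot.instRing (lrel q)

instance fd_dom (q : ℝ) : FiniteDimensional ℂ ((V1 q) ⊗[ℂ] (V1 q)) :=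
  Module.Finite.of_basis (BB q)

lemma finrank_dom (q : ℝ) : Module.finrank ℂ ((V1 q) ⊗[ℂ] (V1 q)) = 36 := by
  rw [Module.finrank_eq_card_basis (BB q)]
  decide

lemma finrank_range_Theta (q : ℝ) : Module.finrank ℂ (LinearMap.range (Theta q)) = 15 := by
  rw [range_Theta, finrank_span_eq_card dw_li, card_NFT]

lemma finrank_ker (q : ℝ) (hq : 0 < q) :
    Module.finrank ℂ (LinearMap.ker (mulMap q)) = 21 := by
  rw [ker_eq q hq]
  have h := LinearMap.finrank_range_add_finrank_ker (K := ℂ) (V := (V1 q) ⊗[ℂ] (V1 q)) (Theta q)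
  rw [finrank_range_Theta, finrank_dom] at h
  omega


set_option synthInstance.maxHeartbeats 400000 in
lemma inf_rank_one (q : ℝ) (hq : 0 < q) (w : ℤ × ℤ) (pa pb : LGen × LGen) (c : ℂ)
    (hpair : ∀ g h : LGen, wt g + wt h = w ↔ ((g, h) = pa ∨ (g, h) = pb))
    (hne : pa ≠ pb)
    (hra : red q pa.1 pa.2 = (-c) • dw pb)
    (hrb : red q pb.1 pb.2 = dw pb) :
    Module.finrank ℂ (LinearMap.ker (mulMap q) ⊓ wtComp q w : Submodule ℂ _) = 1 := by
  set r : (V1 q) ⊗[ℂ] (V1 q) := BB q pa + c • BB q pb with hr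
  have hTheta_r : Theta q r = 0 := by
    rw [hr, map_add, map_smul, Theta_BB, Theta_BB, hra, hrb, ← add_smul, neg_add_cancel,
      zero_smul]
  have hker : r ∈ LinearMap.ker (mulMap q) := by
    rw [ker_eq q hq, LinearMap.mem_ker]; exact hTheta_r
  have hwa : wt pa.1 + wt pa.2 = w := (hpair pa.1 pa.2).2 (Or.inl (by simp))
  have hwb : wt pb.1 + wt pb.2 = w := (hpair pb.1 pb.2).2 (Or.inr (by simp))
  have hwt : r ∈ wtComp q w := by
    apply add_mem
    · exact Submodule.subset_span ⟨pa.1, pa.2, hwa, by rw [BB_apply]⟩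
    · exact Submodule.smul_mem _ _ (Submodule.subset_span ⟨pb.1, pb.2, hwb, by rw [BB_apply]⟩)
  have hr0 : r ≠ 0 := by
    intro h0
    have h1 : ((BB q).repr r) pa = 0 := by rw [h0]; simp
    rw [hr, map_add, map_smul, Module.Basis.repr_self, Module.Basis.repr_self, Finsupp.add_apply,
      Finsupp.smul_apply, Finsupp.single_eq_same, Finsupp.single_eq_of_ne hne] at h1
    simp at h1
  have heq : (LinearMap.ker (mulMap q) ⊓ wtComp q w : Submodule ℂ _) = Submodule.span ℂ {r} := by
    apply le_antisymm
    · rintro x ⟨hk, hw'⟩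
      have hsub : x ∈ Submodule.span ℂ {BB q pa, BB q pb} := by
        refine Submodule.span_le.2 ?_ hw'
        rintro t ⟨g, h, hgh, rfl⟩
        rcases (hpair g h).1 hgh with h1 | h1
        · apply Submodule.subset_span
          left
          rw [← BB_apply' q g h, h1]
        · apply Submodule.subset_span
          right
          rw [← BB_apply' q g h, h1]
          rfl
      obtain ⟨c1, c2, rfl⟩ := Submodule.mem_span_pair.1 hsub
      rw [SetLike.mem_coe, ker_eq q hq, LinearMap.mem_ker] at hk
      rw [map_add, map_smul, map_smul, Theta_BB, Theta_BB, hra, hrb] at hk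
      have h1 := congrFun hk pb
      simp only [Pi.add_apply, Pi.smul_apply, dw, Pi.single_apply, if_pos rfl, if_true,
        eq_self_iff_true, smul_eq_mul, mul_one, Pi.zero_apply] at h1
      have hc : c2 = c1 * c := by linear_combination h1
      rw [hc]
      apply Submodule.mem_span_singleton.2
      exact ⟨c1, by rw [hr, smul_add, smul_smul]⟩
    · rw [Submodule.span_le, Set.singleton_subset_iff]
      exact ⟨hker, hwt⟩
  rw [heq, finrank_span_singleton (K := ℂ) (V := (V1 q) ⊗[ℂ] (V1 q)) hr0]

end Aux

theorem ker_mulMap_dim (q : ℝ) (hq0 : 0 < q) (hq1 : q < 1) :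
    Module.finrank ℂ (LinearMap.ker (mulMap q)) = 21
    ∧ ∀ w ∈ rootWts,
        Module.finrank ℂ (LinearMap.ker (mulMap q) ⊓ wtComp q w : Submodule ℂ _) = 1 := by
  constructor
  · exact finrank_ker q hq0
  · intro w hw
    simp only [rootWts, Set.mem_insert_iff, Set.mem_singleton_iff] at hw
    rcases hw with rfl | rfl | rfl | rfl | rfl | rfl
    · exact inf_rank_one q hq0 _ (e a12, f a2) (f a2, e a12) ((q : ℂ) ^ (1 : ℤ))
        (by decide) (by decide) rfl rfl
    · exact inf_rank_one q hq0 _ (e a12, f a1) (f a1, e a12) ((q : ℂ) ^ (1 : ℤ))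
        (by decide) (by decide) rfl rfl
    · exact inf_rank_one q hq0 _ (e a1, e a2) (e a2, e a1) ((q : ℂ) ^ (-1 : ℤ))
        (by decide) (by decide) rfl rfl
    · exact inf_rank_one q hq0 _ (e a2, f a12) (f a12, e a2) ((q : ℂ) ^ (1 : ℤ))
        (by decide) (by decide) rfl rfl
    · exact inf_rank_one q hq0 _ (e a1, f a12) (f a12, e a1) ((q : ℂ) ^ (1 : ℤ))
        (by decide) (by decide) rfl rfl
    · exact inf_rank_one q hq0 _ (f a1, f a2) (f a2, f a1) ((q : ℂ) ^ (1 : ℤ))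
        (by decide) (by decide) rfl rfl

end QFlagExt
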